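/- Let f : ℝ^n → ℝ be twice continuously differentiable, let Q ∈ ℝ^{n×n} be symmetric positive definite, and let 0 ≤ μ ≤ L with L > 0. Let x₀ ∈ ℝ^n, set x₁ := x₀ − (1/L)·Q^{-1}∇f(x₀), and x_α := x₀ + α(x₁ − x₀). Suppose that μ·Q ⪯ ∇²f(x_α) ⪯ L·Q in the Loewner order for every α ∈ [0,1]. Then: (1) ‖∇f(x₁)‖_{Q^{-1}} ≤ (1 − μ/L)·‖∇f(x₀)‖_{Q^{-1}}, and (2) f(x₁) ≥ f(x₀) − (1/L)·‖∇f(x₀)‖²_{Q^{-1}}. -/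

import Mathlib

open Matrix

private lemma aux_cs (x y z : ℝ) (hp : ∀ r : ℝ, 0 ≤ x + 2*r*y + r^2*z) :
    y^2 ≤ x * z := by
  have hdsc := discrim_le_zero (a := z) (b := 2*y) (c := x) (fun r => by nlinarith [hp r])
  rw [discrim] at hdsc
  nlinarith

private lemma aux_main (c s t bww buu bwu : ℝ) (h0w : 0 ≤ bww) (h0u : 0 ≤ buu)
    (ht : t = bwu) (hcs : bwu^2 ≤ bww * buu) (h2 : bww ≤ c * s) (h3 : buu ≤ c * t) :
    t * t ≤ (c^2 * s) * t := by
  have hcs0 : 0 ≤ c * s := le_trans h0w h2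
  calc t * t = bwu^2 := by rw [ht]; ring
    _ ≤ bww * buu := hcs
    _ ≤ (c*s) * buu := mul_le_mul_of_nonneg_right h2 h0u
    _ ≤ (c*s) * (c*t) := mul_le_mul_of_nonneg_left h3 hcs0
    _ = (c^2 * s) * t := by ring

/-- Gradient descent lemma.  Let `f` be twice continuously differentiable with gradient
`g`, let `Q` be symmetric positive definite, `0 ≤ μ ≤ L`, `L > 0`,
`x₁ = x₀ − (1/L)·Q⁻¹∇f(x₀)`, and suppose `μQ ⪯ ∇²f(x_α) ⪯ LQ` along the segment
`x_α = x₀ + α(x₁ − x₀)`, `α ∈ [0,1]`.  Then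
`‖∇f(x₁)‖_{Q⁻¹} ≤ (1 − μ/L)‖∇f(x₀)‖_{Q⁻¹}` and
`f(x₁) ≥ f(x₀) − (1/L)‖∇f(x₀)‖²_{Q⁻¹}`. -/
theorem stmt13 (n : ℕ) (f : (Fin n → ℝ) → ℝ) (hf : ContDiff ℝ 2 f)
    (g : (Fin n → ℝ) → (Fin n → ℝ))
    (hg : ∀ z : Fin n → ℝ,
      HasFDerivAt f
        (∑ i : Fin n, g z i • (ContinuousLinearMap.proj i : (Fin n → ℝ) →L[ℝ] ℝ)) z)
    (Q : Matrix (Fin n) (Fin n) ℝ) (hQ : Q.PosDef)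
    (μ L : ℝ) (hμ0 : 0 ≤ μ) (hμL : μ ≤ L) (hL : 0 < L)
    (x₀ x₁ : Fin n → ℝ) (hx₁ : x₁ = x₀ - (1 / L) • Q⁻¹.mulVec (g x₀))
    (hHess : ∀ α ∈ Set.Icc (0 : ℝ) 1, ∀ v : Fin n → ℝ,
      μ * (v ⬝ᵥ Q.mulVec v) ≤ iteratedFDeriv ℝ 2 f (x₀ + α • (x₁ - x₀)) ![v, v] ∧
      iteratedFDeriv ℝ 2 f (x₀ + α • (x₁ - x₀)) ![v, v] ≤ L * (v ⬝ᵥ Q.mulVec v)) :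
    Real.sqrt (g x₁ ⬝ᵥ Q⁻¹.mulVec (g x₁)) ≤
        (1 - μ / L) * Real.sqrt (g x₀ ⬝ᵥ Q⁻¹.mulVec (g x₀)) ∧
      f x₀ - (1 / L) * (g x₀ ⬝ᵥ Q⁻¹.mulVec (g x₀)) ≤ f x₁ := by
  -- basic matrix facts
  have hQs : ∀ a b : Fin n → ℝ, a ⬝ᵥ Q.mulVec b = b ⬝ᵥ Q.mulVec a := by
    have hQT : Qᵀ = Q := by
      have := hQ.1
      rw [Matrix.IsHermitian] at this
      simpa using this
    intro a b
    rw [Matrix.dotProduct_mulVec, ← Matrix.mulVec_transpose, hQT, dotProduct_comm]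
  have hQQi : ∀ v : Fin n → ℝ, Q.mulVec (Q⁻¹.mulVec v) = v := by
    intro v
    rw [Matrix.mulVec_mulVec, Matrix.mul_nonsing_inv _ hQ.det_pos.ne'.isUnit,
      Matrix.one_mulVec]
  have hQpsd : ∀ v : Fin n → ℝ, 0 ≤ v ⬝ᵥ Q.mulVec v := by
    intro v; simpa using hQ.posSemidef.dotProduct_mulVec_nonneg v
  set w : Fin n → ℝ := Q⁻¹.mulVec (g x₀) with hw
  set u : Fin n → ℝ := Q⁻¹.mulVec (g x₁) with hu
  set d : Fin n → ℝ := x₁ - x₀ with hdd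
  have hdw : d = (-(1/L)) • w := by
    rw [hdd, hx₁, sub_sub_cancel_left, ← neg_smul]
  have hQw : Q.mulVec w = g x₀ := hQQi _
  have hQu : Q.mulVec u = g x₁ := hQQi _
  -- analytic infrastructure
  set γ : ℝ → (Fin n → ℝ) := fun α => x₀ + α • d with hγ
  have hγc : Continuous γ := by fun_prop
  have hγd : ∀ α : ℝ, HasDerivAt γ d α := by
    intro α
    have h1 : HasDerivAt (fun β : ℝ => β • d) d α := by
      simpa using (hasDerivAt_id α).smul_const d
    simpa [hγ] using h1.const_add x₀
  have hfd_apply : ∀ z v, fderiv ℝ f z v = g z ⬝ᵥ v := by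
    intro z v
    rw [(hg z).fderiv]
    simp [dotProduct]
  have hC1 : ContDiff ℝ 1 (fderiv ℝ f) := hf.fderiv_right (by norm_num)
  set B : ℝ → (Fin n → ℝ) →L[ℝ] (Fin n → ℝ) →L[ℝ] ℝ :=
    fun α => fderiv ℝ (fderiv ℝ f) (γ α) with hB
  have hBc : Continuous B := (hC1.continuous_fderiv (by norm_num)).comp hγc
  have hBc2 : ∀ a b : Fin n → ℝ, Continuous fun α => B α a b := by
    intro a b
    exact (hBc.clm_apply continuous_const).clm_apply continuous_const
  have hBint : ∀ (a b : Fin n → ℝ) (x y : ℝ),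
      IntervalIntegrable (fun α => B α a b) MeasureTheory.volume x y := by
    intro a b x y
    exact (hBc2 a b).intervalIntegrable x y
  have hBsymm : ∀ α (a b : Fin n → ℝ), B α a b = B α b a := by
    intro α a b
    exact (hf.contDiffAt.isSymmSndFDerivAt (by norm_num)) a b
  have hψ : ∀ (v : Fin n → ℝ) (α : ℝ),
      HasDerivAt (fun β => g (γ β) ⬝ᵥ v) (B α d v) α := by
    intro v α
    have h1 : HasDerivAt (fun β => fderiv ℝ f (γ β)) (B α d) α :=
      ((hC1.differentiable (by norm_num) (γ α)).hasFDerivAt).comp_hasDerivAt α (hγd α)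
    have h2 := h1.clm_apply (hasDerivAt_const α v)
    simp only [map_zero, add_zero] at h2
    have h3 : (fun β => (fderiv ℝ f (γ β)) v) = fun β => g (γ β) ⬝ᵥ v := by
      funext β; exact hfd_apply (γ β) v
    rwa [h3] at h2
  have hφ : ∀ α : ℝ, HasDerivAt (fun β => f (γ β)) (g (γ α) ⬝ᵥ d) α := by
    intro α
    have h1 := (hg (γ α)).comp_hasDerivAt α (hγd α)
    have h2 : (∑ i : Fin n, g (γ α) i • (ContinuousLinearMap.proj i : (Fin n → ℝ) →L[ℝ] ℝ)) d
        = g (γ α) ⬝ᵥ d := by simp [dotProduct]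
    rwa [h2] at h1
  -- Hessian bounds in terms of B
  have hBd : ∀ α ∈ Set.Icc (0:ℝ) 1, ∀ v : Fin n → ℝ,
      μ * (v ⬝ᵥ Q.mulVec v) ≤ B α v v ∧ B α v v ≤ L * (v ⬝ᵥ Q.mulVec v) := by
    intro α hα v
    have hkey : iteratedFDeriv ℝ 2 f (x₀ + α • d) ![v, v] = B α v v := by
      rw [iteratedFDeriv_two_apply]
      simp [hB, hγ]
    have := hHess α hα v
    rwa [hkey] at this
  have hγ0 : γ 0 = x₀ := by simp [hγ]
  have hγ1 : γ 1 = x₁ := by simp [hγ, hdd]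
  -- the averaged bilinear form
  set S : (Fin n → ℝ) → (Fin n → ℝ) → ℝ :=
    fun a b => ∫ α in (0:ℝ)..1, B α a b with hS
  have hgrad : ∀ v, g x₁ ⬝ᵥ v - g x₀ ⬝ᵥ v = S d v := by
    intro v
    have h := intervalIntegral.integral_eq_sub_of_hasDerivAt
      (f := fun β => g (γ β) ⬝ᵥ v) (f' := fun α => B α d v)
      (fun α _ => hψ v α) (hBint d v 0 1)
    simp only [hγ0, hγ1] at h
    simp only [hS]
    exact h.symm
  have hSlb : ∀ v, μ * (v ⬝ᵥ Q.mulVec v) ≤ S v v := by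
    intro v
    have h := intervalIntegral.integral_mono_on (μ := MeasureTheory.volume) zero_le_one
      intervalIntegrable_const (hBint v v 0 1) (fun α hα => (hBd α hα v).1)
    simpa [hS] using h
  have hSub : ∀ v, S v v ≤ L * (v ⬝ᵥ Q.mulVec v) := by
    intro v
    have h := intervalIntegral.integral_mono_on (μ := MeasureTheory.volume) zero_le_one
      (hBint v v 0 1) intervalIntegrable_const (fun α hα => (hBd α hα v).2)
    simpa [hS] using h
  have hSd : ∀ v, S d v = -(1/L) * S w v := by
    intro v
    have h1 : (fun α => B α d v) = fun α => -(1/L) * B α w v := by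
      funext α
      rw [hdw]
      simp
    simp only [hS]
    rw [h1, intervalIntegral.integral_const_mul]
  set Bf : (Fin n → ℝ) → (Fin n → ℝ) → ℝ :=
    fun a b => a ⬝ᵥ Q.mulVec b - (1/L) * S a b with hBf
  have hg1 : ∀ v, g x₁ ⬝ᵥ v = Bf w v := by
    intro v
    have h1 := hgrad v
    rw [hSd v] at h1
    have h2 : g x₀ ⬝ᵥ v = w ⬝ᵥ Q.mulVec v := by
      rw [hQs w v, hQw, dotProduct_comm]
    simp only [hBf]
    linarith
  have hc0 : (0:ℝ) ≤ 1 - μ/L := by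
    have : μ / L ≤ 1 := (div_le_one hL).2 hμL
    linarith
  have hcL : (0:ℝ) ≤ 1/L := by positivity
  have hBf0 : ∀ v, 0 ≤ Bf v v := by
    intro v
    have h1 := mul_le_mul_of_nonneg_left (hSub v) hcL
    have h2 : 1/L * (L * (v ⬝ᵥ Q.mulVec v)) = v ⬝ᵥ Q.mulVec v := by field_simp
    simp only [hBf]
    linarith
  have hBfc : ∀ v, Bf v v ≤ (1 - μ/L) * (v ⬝ᵥ Q.mulVec v) := by
    intro v
    have h1 := mul_le_mul_of_nonneg_left (hSlb v) hcL
    have h2 : 1/L * (μ * (v ⬝ᵥ Q.mulVec v)) = μ/L * (v ⬝ᵥ Q.mulVec v) := by ring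
    have h3 : (1 - μ/L) * (v ⬝ᵥ Q.mulVec v) = v ⬝ᵥ Q.mulVec v - μ/L * (v ⬝ᵥ Q.mulVec v) := by
      ring
    simp only [hBf]
    linarith
  -- quadratic expansion and Cauchy–Schwarz
  have hSexp : ∀ (a b : Fin n → ℝ) (r : ℝ),
      S (a + r • b) (a + r • b) = S a a + 2*r*(S a b) + r^2 * S b b := by
    intro a b r
    have hfun : (fun α => B α (a + r • b) (a + r • b))
        = fun α => B α a a + (2*r) * B α a b + r^2 * B α b b := by
      funext α
      have h1 : (B α) (a + r • b) (a + r • b)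
          = B α a a + r * B α b a + (r * B α a b + r^2 * (B α b b)) := by
        simp [map_add, _root_.map_smul, ContinuousLinearMap.add_apply,
          ContinuousLinearMap.smul_apply, smul_eq_mul]
        ring
      rw [h1, hBsymm α b a]
      ring
    simp only [hS]
    rw [hfun,
      intervalIntegral.integral_add ((hBint a a 0 1).add ((hBint a b 0 1).const_mul (2*r)))
        ((hBint b b 0 1).const_mul (r^2)),
      intervalIntegral.integral_add (hBint a a 0 1) ((hBint a b 0 1).const_mul (2*r)),
      intervalIntegral.integral_const_mul, intervalIntegral.integral_const_mul]
  have hBfexp : ∀ (a b : Fin n → ℝ) (r : ℝ),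
      Bf (a + r • b) (a + r • b) = Bf a a + 2*r*(Bf a b) + r^2 * Bf b b := by
    intro a b r
    have e1 : (a + r • b) ⬝ᵥ Q.mulVec (a + r • b)
        = a ⬝ᵥ Q.mulVec a + r * (a ⬝ᵥ Q.mulVec b)
          + (r * (b ⬝ᵥ Q.mulVec a) + r^2 * (b ⬝ᵥ Q.mulVec b)) := by
      rw [Matrix.mulVec_add, Matrix.mulVec_smul]
      simp [add_dotProduct, dotProduct_add, smul_dotProduct,
        dotProduct_smul, smul_eq_mul]
      ring
    simp only [hBf]
    rw [hSexp a b r, e1, hQs b a]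
    ring
  clear_value Bf S B γ d u w
  have hCS : ∀ a b : Fin n → ℝ, (Bf a b)^2 ≤ Bf a a * Bf b b := by
    intro a b
    exact aux_cs _ _ _ (fun r => by rw [← hBfexp a b r]; exact hBf0 _)
  -- conclusion, part 1
  have hs : w ⬝ᵥ Q.mulVec w = g x₀ ⬝ᵥ w := by
    rw [hQw, dotProduct_comm]
  have ht : u ⬝ᵥ Q.mulVec u = g x₁ ⬝ᵥ u := by
    rw [hQu, dotProduct_comm]
  have hs0 : 0 ≤ g x₀ ⬝ᵥ w := by
    have := hQ.inv.posSemidef.dotProduct_mulVec_nonneg (g x₀)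
    simpa [hw] using this
  have ht0 : 0 ≤ g x₁ ⬝ᵥ u := by
    have := hQ.inv.posSemidef.dotProduct_mulVec_nonneg (g x₁)
    simpa [hu] using this
  have htBf : g x₁ ⬝ᵥ u = Bf w u := hg1 u
  have part1 : Real.sqrt (g x₁ ⬝ᵥ u) ≤ (1 - μ / L) * Real.sqrt (g x₀ ⬝ᵥ w) := by
    rcases eq_or_lt_of_le ht0 with h0 | hpos
    · rw [← h0, Real.sqrt_zero]
      exact mul_nonneg hc0 (Real.sqrt_nonneg _)
    · have h1 : (Bf w u)^2 ≤ Bf w w * Bf u u := hCS w u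
      have h2 : Bf w w ≤ (1 - μ/L) * (g x₀ ⬝ᵥ w) := by
        have := hBfc w; rwa [hs] at this
      have h3 : Bf u u ≤ (1 - μ/L) * (g x₁ ⬝ᵥ u) := by
        have := hBfc u; rwa [ht] at this
      have hkey : g x₁ ⬝ᵥ u ≤ (1 - μ/L)^2 * (g x₀ ⬝ᵥ w) := by
        have h4 : (g x₁ ⬝ᵥ u) * (g x₁ ⬝ᵥ u) ≤ ((1 - μ/L)^2 * (g x₀ ⬝ᵥ w)) * (g x₁ ⬝ᵥ u) :=
          aux_main _ _ _ _ _ _ (hBf0 w) (hBf0 u) htBf h1 h2 h3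
        exact le_of_mul_le_mul_right h4 hpos
      calc Real.sqrt (g x₁ ⬝ᵥ u) ≤ Real.sqrt ((1 - μ/L)^2 * (g x₀ ⬝ᵥ w)) :=
            Real.sqrt_le_sqrt hkey
        _ = (1 - μ / L) * Real.sqrt (g x₀ ⬝ᵥ w) := by
            rw [Real.sqrt_mul (sq_nonneg _), Real.sqrt_sq hc0]
  -- part 2
  have hgc : Continuous fun α => g (γ α) ⬝ᵥ d := by
    have h1 : (fun α => g (γ α) ⬝ᵥ d) = fun α => fderiv ℝ f (γ α) d := by
      funext α; exact (hfd_apply (γ α) d).symm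
    rw [h1]
    exact (((hf.continuous_fderiv (by norm_num)).comp hγc).clm_apply continuous_const)
  have hfx : f x₁ - f x₀ = ∫ α in (0:ℝ)..1, g (γ α) ⬝ᵥ d := by
    have h := intervalIntegral.integral_eq_sub_of_hasDerivAt
      (f := fun β => f (γ β)) (f' := fun α => g (γ α) ⬝ᵥ d)
      (fun α _ => hφ α) (hgc.intervalIntegrable 0 1)
    simp only [hγ0, hγ1] at h
    exact h.symm
  have hlow : ∀ α ∈ Set.Icc (0:ℝ) 1, g x₀ ⬝ᵥ d ≤ g (γ α) ⬝ᵥ d := by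
    intro α hα
    have hFTC := intervalIntegral.integral_eq_sub_of_hasDerivAt
      (f := fun β => g (γ β) ⬝ᵥ d) (f' := fun β => B β d d)
      (fun β _ => hψ d β) (hBint d d 0 α)
    have hnn : 0 ≤ ∫ β in (0:ℝ)..α, B β d d := by
      apply intervalIntegral.integral_nonneg hα.1
      intro β hβ
      have hβ1 : β ∈ Set.Icc (0:ℝ) 1 := ⟨hβ.1, le_trans hβ.2 hα.2⟩
      exact le_trans (mul_nonneg hμ0 (hQpsd d)) (hBd β hβ1 d).1
    rw [hFTC] at hnn
    simp only [hγ0] at hnn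
    linarith
  have hint2 : g x₀ ⬝ᵥ d ≤ ∫ α in (0:ℝ)..1, g (γ α) ⬝ᵥ d := by
    have h := intervalIntegral.integral_mono_on (μ := MeasureTheory.volume) zero_le_one
      intervalIntegrable_const (hgc.intervalIntegrable 0 1) hlow
    simpa using h
  have hgd : g x₀ ⬝ᵥ d = -(1/L) * (g x₀ ⬝ᵥ w) := by
    rw [hdw]
    simp
  constructor
  · exact part1
  · linarith
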